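/- Let 1 < q < ∞ and let M be an Orlicz function. Then M is equivalent on the segment [0,1] to a q-concave Orlicz function if and only if there exists a constant C > 0 such that C⁻¹·s^q·M(t) ≤ M(st) for all 0 < s < 1 and all 0 < t ≤ 1. -/

import Mathlib

open MeasureTheory Set

noncomputable section

/-- An Orlicz function: increasing, convex on `[0,∞)` with `M 0 = 0`. -/
def IsOrliczFunction (M : ℝ → ℝ) : Prop :=
  MonotoneOn M (Ici 0) ∧ ConvexOn ℝ (Ici 0) M ∧ M 0 = 0

/-- `M` is `r`-concave: `t ↦ M (t ^ (1/r))` is concave on `[0,∞)`. -/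
def RConcave (r : ℝ) (M : ℝ → ℝ) : Prop :=
  ConcaveOn ℝ (Ici 0) fun t : ℝ => M (t ^ (1 / r))

/-- Two functions are equivalent on the segment `[0,1]`. -/
def EquivOn01 (M N : ℝ → ℝ) : Prop :=
  ∃ C > (0:ℝ), ∀ t ∈ Icc (0:ℝ) 1, C⁻¹ * M t ≤ N t ∧ N t ≤ C * M t

theorem forward_dir
    (q : ℝ) (hq : 1 < q)
    (M : ℝ → ℝ) (hM : IsOrliczFunction M)
    (h : ∃ N : ℝ → ℝ, IsOrliczFunction N ∧ RConcave q N ∧ EquivOn01 M N) :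
    ∃ C > (0:ℝ), ∀ s t : ℝ, 0 < s → s < 1 → 0 < t → t ≤ 1 →
        C⁻¹ * s ^ q * M t ≤ M (s * t) := by
  obtain ⟨N, ⟨hNmono, hNconv, hN0⟩, hNconc, C, hCpos, hequiv⟩ := h
  have hq0 : (0:ℝ) < q := lt_trans one_pos hq
  refine ⟨C * C, by positivity, fun s t hs hs1 ht ht1 => ?_⟩
  have hst0 : 0 < s * t := mul_pos hs ht
  have hst1 : s * t ≤ 1 := by nlinarith
  have h1 : C⁻¹ * N (s * t) ≤ M (s * t) := by
    have := (hequiv (s*t) ⟨hst0.le, hst1⟩).2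
    rw [inv_mul_le_iff₀ hCpos]
    linarith [this]
  -- q-concavity: N (s*t) ≥ s^q * N t
  have hsq1 : s ^ q ≤ 1 := Real.rpow_le_one hs.le hs1.le hq0.le
  have hsq0 : (0:ℝ) ≤ s ^ q := Real.rpow_nonneg hs.le q
  have h2 : s ^ q * N t ≤ N (s * t) := by
    have key := hNconc.2 (show t ^ q ∈ Ici (0:ℝ) by simp [Real.rpow_nonneg ht.le])
      (show (0:ℝ) ∈ Ici (0:ℝ) by simp) hsq0 (show (0:ℝ) ≤ 1 - s ^ q by linarith)
      (show s ^ q + (1 - s ^ q) = 1 by ring)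
    have e0 : (0:ℝ) ^ (1/q) = 0 := by
      rw [Real.zero_rpow (by positivity)]
    have e1 : (t ^ q) ^ (1/q) = t := by
      rw [← Real.rpow_mul ht.le, mul_one_div_cancel hq0.ne', Real.rpow_one]
    have e2 : (s ^ q * (t ^ q) + (1 - s ^ q) * 0) = (s*t) ^ q := by
      rw [Real.mul_rpow hs.le ht.le]; ring
    have e3 : ((s*t) ^ q) ^ (1/q) = s * t := by
      rw [← Real.rpow_mul hst0.le, mul_one_div_cancel hq0.ne', Real.rpow_one]
    simp only [smul_eq_mul] at key
    rw [e1, e0, hN0, e2, e3] at key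
    linarith [key]
  have h3 : C⁻¹ * M t ≤ N t := (hequiv t ⟨ht.le, ht1⟩).1
  have hMt : 0 ≤ M t := by
    have := hM.1 (show (0:ℝ) ∈ Ici 0 by simp) (show t ∈ Ici (0:ℝ) by exact ht.le) ht.le
    rw [hM.2.2] at this; exact this
  calc (C*C)⁻¹ * s ^ q * M t = C⁻¹ * (s ^ q * (C⁻¹ * M t)) := by
        rw [mul_inv]; ring
    _ ≤ C⁻¹ * (s ^ q * N t) := by
        have := mul_le_mul_of_nonneg_left h3 hsq0
        exact mul_le_mul_of_nonneg_left this (by positivity)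
    _ ≤ C⁻¹ * N (s * t) := mul_le_mul_of_nonneg_left h2 (by positivity)
    _ ≤ M (s * t) := h1

-- integral monotonicity on Ioc
theorem integral_mono_Ioc {f g : ℝ → ℝ} {a b : ℝ} (hab : a ≤ b)
    (hf : IntervalIntegrable f volume a b) (hg : IntervalIntegrable g volume a b)
    (h : ∀ u ∈ Ioc a b, f u ≤ g u) :
    ∫ u in a..b, f u ≤ ∫ u in a..b, g u := by
  rw [intervalIntegral.integral_of_le hab, intervalIntegral.integral_of_le hab]
  exact setIntegral_mono_on ((intervalIntegrable_iff_integrableOn_Ioc_of_le hab).1 hf)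
    ((intervalIntegrable_iff_integrableOn_Ioc_of_le hab).1 hg) measurableSet_Ioc h

set_option maxHeartbeats 2000000 in
theorem backward_dir
    (q : ℝ) (hq : 1 < q)
    (M : ℝ → ℝ) (hM : IsOrliczFunction M) (hM1 : M 1 = 1)
    (C : ℝ) (hC1 : 1 ≤ C)
    (hC : ∀ s t : ℝ, 0 < s → s < 1 → 0 < t → t ≤ 1 → C⁻¹ * s ^ q * M t ≤ M (s * t)) :
    ∃ N : ℝ → ℝ, IsOrliczFunction N ∧ RConcave q N ∧ EquivOn01 M N := by
  obtain ⟨hMmono, hMconv, hM0⟩ := hM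
  have hq0 : (0:ℝ) < q := lt_trans one_pos hq
  have hq0' : q ≠ 0 := hq0.ne'
  have hiq : (0:ℝ) < 1/q := by positivity
  have hC0 : (0:ℝ) < C := lt_of_lt_of_le one_pos hC1
  -- M is nonneg on [0,∞)
  have hMnn : ∀ w : ℝ, 0 ≤ w → 0 ≤ M w := by
    intro w hw
    have := hMmono (show (0:ℝ) ∈ Ici 0 by simp) (show w ∈ Ici (0:ℝ) from hw) hw
    rwa [hM0] at this
  -- slope estimate from convexity
  have hslope : ∀ v w : ℝ, 0 ≤ v → v ≤ w → 0 < w → M v ≤ v / w * M w := by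
    intro v w hv hvw hw
    have key := hMconv.2 (show w ∈ Ici (0:ℝ) from hw.le) (show (0:ℝ) ∈ Ici (0:ℝ) by simp)
      (show 0 ≤ v/w by positivity) (show 0 ≤ 1 - v/w by
        have : v/w ≤ 1 := by rw [div_le_one hw]; exact hvw
        linarith)
      (show v/w + (1 - v/w) = 1 by ring)
    simp only [smul_eq_mul, mul_zero, add_zero, hM0] at key
    rw [div_mul_cancel₀ _ hw.ne'] at key
    linarith [key]
  set g : ℝ → ℝ := fun w => M w / w ^ q with hgdef
  -- g almost decreasing
  have hgnn : ∀ w : ℝ, 0 ≤ w → 0 ≤ g w := by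
    intro w hw; exact div_nonneg (hMnn w hw) (Real.rpow_nonneg hw q)
  have hgdec : ∀ v w : ℝ, 0 < v → v ≤ w → w ≤ 1 → g w ≤ C * g v := by
    intro v w hv hvw hw1
    have hw0 : (0:ℝ) < w := lt_of_lt_of_le hv hvw
    rcases eq_or_lt_of_le hvw with rfl | hlt
    · have := hgnn v hv.le
      nlinarith
    · have key := hC (v/w) w (by positivity) (by rw [div_lt_one hw0]; exact hlt) hw0 hw1
      rw [div_mul_cancel₀ _ hw0.ne'] at key
      rw [Real.div_rpow hv.le hw0.le] at key
      have hvq : (0:ℝ) < v ^ q := Real.rpow_pos_of_pos hv q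
      have hwq : (0:ℝ) < w ^ q := Real.rpow_pos_of_pos hw0 q
      have key2 : v ^ q * M w ≤ C * w ^ q * M v := by
        have h' := mul_le_mul_of_nonneg_left key (by positivity : (0:ℝ) ≤ C * w ^ q)
        have e : C * w ^ q * (C⁻¹ * (v ^ q / w ^ q) * M w) = v ^ q * M w := by
          field_simp
        rw [e] at h'
        linarith [h']
      simp only [hgdef]
      rw [mul_div_assoc' C (M v) (v ^ q), div_le_div_iff₀ hwq hvq]
      nlinarith [key2]
    -- the decreasing rearrangement integrand
  set ψ : ℝ → ℝ := fun u => sSup (g '' Icc (min (max u 0 ^ (1/q)) 1) 1) with hψdef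
  have hψ_nn : ∀ u : ℝ, 0 ≤ ψ u := by
    intro u
    apply Real.sSup_nonneg
    rintro x ⟨w, hw, rfl⟩
    have h0 : (0:ℝ) ≤ min (max u 0 ^ (1/q)) 1 :=
      le_min (Real.rpow_nonneg (le_max_right u 0) _) one_pos.le
    exact hgnn w (le_trans h0 hw.1)
  have hbdd : ∀ v : ℝ, 0 < v → v ≤ 1 → BddAbove (g '' Icc v 1) := by
    intro v hv hv1
    refine ⟨C * g v, ?_⟩
    rintro x ⟨w, hw, rfl⟩
    exact hgdec v w hv hw.1 hw.2
  have hmin_pos : ∀ u : ℝ, 0 < u → 0 < min (max u 0 ^ (1/q)) 1 := by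
    intro u hu
    rw [max_eq_left hu.le]
    exact lt_min (Real.rpow_pos_of_pos hu _) one_pos
  have hψ_eval : ∀ u : ℝ, 0 < u → u ≤ 1 → ψ u = sSup (g '' Icc (u ^ (1/q)) 1) := by
    intro u hu hu1
    have : min (max u 0 ^ (1/q)) 1 = u ^ (1/q) := by
      rw [max_eq_left hu.le]
      exact min_eq_left (Real.rpow_le_one hu.le hu1 hiq.le)
    simp only [hψdef]; rw [this]
  have hψ_pow : ∀ v : ℝ, 0 < v → v ≤ 1 → ψ (v ^ q) = sSup (g '' Icc v 1) := by
    intro v hv hv1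
    have hvq1 : v ^ q ≤ 1 := Real.rpow_le_one hv.le hv1 hq0.le
    have hvq0 : 0 < v ^ q := Real.rpow_pos_of_pos hv q
    rw [hψ_eval _ hvq0 hvq1, ← Real.rpow_mul hv.le, mul_one_div_cancel hq0', Real.rpow_one]
  have hψ_ge : ∀ v : ℝ, 0 < v → v ≤ 1 → g v ≤ ψ (v ^ q) := by
    intro v hv hv1
    rw [hψ_pow v hv hv1]
    exact le_csSup (hbdd v hv hv1) ⟨v, ⟨le_rfl, hv1⟩, rfl⟩
  have hψ_le : ∀ v : ℝ, 0 < v → v ≤ 1 → ψ (v ^ q) ≤ C * g v := by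
    intro v hv hv1
    rw [hψ_pow v hv hv1]
    apply Real.sSup_le _ (mul_nonneg hC0.le (hgnn v hv.le))
    · rintro x ⟨w, hw, rfl⟩
      exact hgdec v w hv hw.1 hw.2
  have hψ_one : ∀ u : ℝ, 1 ≤ u → ψ u = 1 := by
    intro u hu
    have h1 : min (max u 0 ^ (1/q)) 1 = 1 := by
      apply min_eq_right
      rw [max_eq_left (le_trans one_pos.le hu)]
      calc (1:ℝ) = 1 ^ (1/q) := (Real.one_rpow _).symm
        _ ≤ u ^ (1/q) := Real.rpow_le_rpow one_pos.le hu hiq.le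
    simp only [hψdef, h1, Icc_self, image_singleton, csSup_singleton, hgdef]
    simp [Real.one_rpow, hM1]
  have hψ_anti : ∀ u₁ u₂ : ℝ, 0 < u₁ → u₁ ≤ u₂ → ψ u₂ ≤ ψ u₁ := by
    intro u₁ u₂ h1 h12
    have h2 : (0:ℝ) < u₂ := lt_of_lt_of_le h1 h12
    have hm1 := hmin_pos u₁ h1
    have hm1' : min (max u₁ 0 ^ (1/q)) 1 ≤ 1 := min_le_right _ _
    have hm2' : min (max u₂ 0 ^ (1/q)) 1 ≤ 1 := min_le_right _ _
    apply csSup_le_csSup (hbdd _ hm1 hm1')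
    · exact ⟨g 1, ⟨1, ⟨hm2', le_rfl⟩, rfl⟩⟩
    · apply image_mono
      apply Icc_subset_Icc_left
      rw [max_eq_left h1.le, max_eq_left h2.le]
      exact le_min (min_le_of_left_le (Real.rpow_le_rpow h1.le h12 hiq.le)) (min_le_right _ _)
  have hpow_inv : ∀ x : ℝ, 0 ≤ x → (x ^ q) ^ (1/q) = x := by
    intro x hx
    rw [← Real.rpow_mul hx, mul_one_div_cancel hq0', Real.rpow_one]
  have hinv_pow : ∀ x : ℝ, 0 ≤ x → (x ^ (1/q)) ^ q = x := by
    intro x hx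
    rw [← Real.rpow_mul hx, one_div_mul_cancel hq0', Real.rpow_one]
  -- pointwise upper bound for integrability
  have hψ_ub : ∀ u : ℝ, 0 < u → ψ u ≤ C * u ^ (1/q - 1) + C := by
    intro u hu
    have hrnn : (0:ℝ) ≤ C * u ^ (1/q - 1) := by positivity
    rcases le_or_gt u 1 with hu1 | hu1
    · have hv : 0 < u ^ (1/q) := Real.rpow_pos_of_pos hu _
      have hv1 : u ^ (1/q) ≤ 1 := Real.rpow_le_one hu.le hu1 hiq.le
      have h1 : ψ u ≤ C * g (u ^ (1/q)) := by
        have := hψ_le (u ^ (1/q)) hv hv1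
        rwa [hinv_pow u hu.le] at this
      have h2 : g (u ^ (1/q)) ≤ u ^ (1/q - 1) := by
        simp only [hgdef]
        rw [hinv_pow u hu.le]
        have hMv : M (u ^ (1/q)) ≤ u ^ (1/q) := by
          have := hslope (u ^ (1/q)) 1 hv.le hv1 one_pos
          rwa [hM1, div_one, mul_one] at this
        rw [Real.rpow_sub hu, Real.rpow_one, div_le_div_iff₀ hu hu]
        exact mul_le_mul_of_nonneg_right hMv hu.le
      calc ψ u ≤ C * g (u ^ (1/q)) := h1
        _ ≤ C * u ^ (1/q - 1) := mul_le_mul_of_nonneg_left h2 hC0.le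
        _ ≤ _ := by linarith
    · rw [hψ_one u hu1.le]; linarith
  -- interval integrability of ψ
  have hψ_int : ∀ a b : ℝ, 0 ≤ a → a ≤ b → IntervalIntegrable ψ volume a b := by
    intro a b ha hab
    rw [intervalIntegrable_iff_integrableOn_Ioc_of_le hab]
    have hmeas : AEMeasurable ψ (volume.restrict (Ioc a b)) :=
      aemeasurable_restrict_of_antitoneOn measurableSet_Ioc
        (fun u₁ hu₁ u₂ _ h12 => hψ_anti u₁ u₂ (lt_of_le_of_lt ha hu₁.1) h12)
    have hdom : IntervalIntegrable (fun u : ℝ => C * u ^ (1/q - 1) + C) volume a b :=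
      ((intervalIntegral.intervalIntegrable_rpow' (by linarith : (-1:ℝ) < 1/q - 1)).const_mul
        C).add intervalIntegrable_const
    apply Integrable.mono' ((intervalIntegrable_iff_integrableOn_Ioc_of_le hab).1 hdom)
      hmeas.aestronglyMeasurable
    rw [ae_restrict_iff' measurableSet_Ioc]
    filter_upwards with u hu
    rw [Real.norm_eq_abs, abs_of_nonneg (hψ_nn u)]
    exact hψ_ub u (lt_of_le_of_lt ha hu.1)
  -- the candidate Orlicz function
  set N : ℝ → ℝ := fun x => ∫ u in (0:ℝ)..(x ^ q), ψ u with hNdef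
  have hN0 : N 0 = 0 := by
    simp only [hNdef]
    rw [Real.zero_rpow hq0', intervalIntegral.integral_same]
  have hNadd : ∀ x y : ℝ, 0 ≤ x → x ≤ y → N y = N x + ∫ u in (x^q)..(y^q), ψ u := by
    intro x y hx hxy
    simp only [hNdef]
    rw [← intervalIntegral.integral_add_adjacent_intervals
      (hψ_int 0 (x^q) le_rfl (Real.rpow_nonneg hx q))
      (hψ_int (x^q) (y^q) (Real.rpow_nonneg hx q) (Real.rpow_le_rpow hx hxy hq0.le))]
  have hNmono : MonotoneOn N (Ici 0) := by
    intro x hx y hy hxy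
    rw [hNadd x y hx hxy]
    have : 0 ≤ ∫ u in (x^q)..(y^q), ψ u :=
      intervalIntegral.integral_nonneg (Real.rpow_le_rpow hx hxy hq0.le) (fun u _ => hψ_nn u)
    linarith
  -- lower bound: M ≤ N on (0,1]
  have hNlow : ∀ t : ℝ, 0 < t → t ≤ 1 → M t ≤ N t := by
    intro t ht ht1
    have htq0 : 0 < t ^ q := Real.rpow_pos_of_pos ht q
    have h1 : t ^ q * ψ (t ^ q) ≤ N t := by
      have hconst : ∫ u in (0:ℝ)..(t^q), ψ (t^q) = t ^ q * ψ (t ^ q) := by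
        rw [intervalIntegral.integral_const, smul_eq_mul, sub_zero]
      rw [← hconst]
      simp only [hNdef]
      exact integral_mono_Ioc htq0.le intervalIntegrable_const
        (hψ_int 0 (t^q) le_rfl htq0.le) (fun u hu => hψ_anti u (t^q) hu.1 hu.2)
    have h2 : M t ≤ t ^ q * ψ (t ^ q) := by
      have := mul_le_mul_of_nonneg_left (hψ_ge t ht ht1) htq0.le
      have e : t ^ q * g t = M t := by
        simp only [hgdef]
        field_simp
      linarith [e ▸ this]
    linarith
  -- upper bound: N ≤ C q M on (0,1]
  have hNup : ∀ t : ℝ, 0 < t → t ≤ 1 → N t ≤ C * q * M t := by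
    intro t ht ht1
    have htq0 : 0 < t ^ q := Real.rpow_pos_of_pos ht q
    have hptwise : ∀ u ∈ Ioc (0:ℝ) (t^q), ψ u ≤ (C * (M t / t)) * u ^ (1/q - 1) := by
      intro u hu
      have hu0 : (0:ℝ) < u := hu.1
      have hv0 : 0 < u ^ (1/q) := Real.rpow_pos_of_pos hu0 _
      have hvt : u ^ (1/q) ≤ t := by
        have := Real.rpow_le_rpow hu0.le hu.2 hiq.le
        rwa [hpow_inv t ht.le] at this
      have hv1 : u ^ (1/q) ≤ 1 := le_trans hvt ht1
      have h1 : ψ u ≤ C * g (u ^ (1/q)) := by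
        have := hψ_le (u ^ (1/q)) hv0 hv1
        rwa [hinv_pow u hu0.le] at this
      have h2 : g (u ^ (1/q)) ≤ (M t / t) * u ^ (1/q - 1) := by
        simp only [hgdef]
        rw [hinv_pow u hu0.le]
        have hMv : M (u ^ (1/q)) ≤ u ^ (1/q) / t * M t := hslope _ t hv0.le hvt ht
        rw [Real.rpow_sub hu0, Real.rpow_one, div_le_iff₀ hu0]
        calc M (u ^ (1/q)) ≤ u ^ (1/q) / t * M t := hMv
          _ = M t / t * (u ^ (1/q) / u) * u := by field_simp
      calc ψ u ≤ C * g (u ^ (1/q)) := h1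
        _ ≤ C * ((M t / t) * u ^ (1/q - 1)) :=
            mul_le_mul_of_nonneg_left h2 hC0.le
        _ = (C * (M t / t)) * u ^ (1/q - 1) := by ring
    have hint : ∫ u in (0:ℝ)..(t^q), (C * (M t / t)) * u ^ (1/q - 1) = C * q * M t := by
      rw [intervalIntegral.integral_const_mul, integral_rpow (Or.inl (by linarith : (-1:ℝ) < 1/q - 1))]
      rw [sub_add_cancel, hpow_inv t ht.le, Real.zero_rpow (ne_of_gt hiq)]
      field_simp
      ring
    calc N t ≤ ∫ u in (0:ℝ)..(t^q), (C * (M t / t)) * u ^ (1/q - 1) := by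
          simp only [hNdef]
          exact integral_mono_Ioc htq0.le (hψ_int 0 (t^q) le_rfl htq0.le)
            (((intervalIntegral.intervalIntegrable_rpow'
              (by linarith : (-1:ℝ) < 1/q - 1)).const_mul _)) hptwise
      _ = C * q * M t := hint
  -- monotonicity of s ↦ s^(q-1) ψ(s^q)
  have hρ1 : ∀ s t : ℝ, 0 < s → s ≤ t → t ≤ 1 →
      s ^ (q-1) * ψ (s ^ q) ≤ t ^ (q-1) * ψ (t ^ q) := by
    intro s t hs hst ht1
    have hs1 : s ≤ 1 := le_trans hst ht1
    have ht0 : (0:ℝ) < t := lt_of_lt_of_le hs hst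
    have hsq1 : (0:ℝ) < s ^ (q-1) := Real.rpow_pos_of_pos hs _
    have hBnn : (0:ℝ) ≤ t ^ (q-1) * ψ (t ^ q) :=
      mul_nonneg (Real.rpow_nonneg ht0.le _) (hψ_nn _)
    rw [hψ_pow s hs hs1, mul_comm, ← le_div_iff₀ hsq1]
    apply Real.sSup_le _ (div_nonneg hBnn hsq1.le)
    rintro x ⟨w, hw, rfl⟩
    rw [le_div_iff₀ hsq1]
    have hw0 : (0:ℝ) < w := lt_of_lt_of_le hs hw.1
    rcases le_total t w with htw | hwt
    · have h1 : g w ≤ ψ (t ^ q) := by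
        rw [hψ_pow t ht0 ht1]
        exact le_csSup (hbdd t ht0 ht1) ⟨w, ⟨htw, hw.2⟩, rfl⟩
      have h2 : s ^ (q-1) ≤ t ^ (q-1) := Real.rpow_le_rpow hs.le hst (by linarith)
      calc g w * s ^ (q-1) ≤ ψ (t ^ q) * t ^ (q-1) :=
            mul_le_mul h1 h2 hsq1.le (hψ_nn _)
        _ = t ^ (q-1) * ψ (t ^ q) := mul_comm _ _
    · have hdiv : ∀ r : ℝ, 0 < r → g r * r ^ (q-1) = M r / r := by
        intro r hr
        have e : r ^ (q-1) = r ^ q / r := by rw [Real.rpow_sub hr, Real.rpow_one]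
        simp only [hgdef]
        rw [e]
        have hrq : r ^ q ≠ 0 := (Real.rpow_pos_of_pos hr q).ne'
        field_simp
      have h1 : g w * s ^ (q-1) ≤ g w * w ^ (q-1) :=
        mul_le_mul_of_nonneg_left (Real.rpow_le_rpow hs.le hw.1 (by linarith))
          (hgnn w hw0.le)
      have h2 : M w / w ≤ M t / t := by
        have := hslope w t hw0.le hwt ht0
        rw [div_le_div_iff₀ hw0 ht0]
        calc M w * t ≤ (w / t * M t) * t := mul_le_mul_of_nonneg_right this ht0.le
          _ = M t * w := by field_simp
      have h3 : g t ≤ ψ (t ^ q) := hψ_ge t ht0 ht1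
      calc g w * s ^ (q-1) ≤ g w * w ^ (q-1) := h1
        _ = M w / w := hdiv w hw0
        _ ≤ M t / t := h2
        _ = g t * t ^ (q-1) := (hdiv t ht0).symm
        _ ≤ ψ (t ^ q) * t ^ (q-1) :=
            mul_le_mul_of_nonneg_right h3 (Real.rpow_nonneg ht0.le _)
        _ = t ^ (q-1) * ψ (t ^ q) := mul_comm _ _
  have hψ_pow_ge1 : ∀ s : ℝ, 1 ≤ s → ψ (s ^ q) = 1 := by
    intro s hs
    apply hψ_one
    calc (1:ℝ) = 1 ^ q := (Real.one_rpow q).symm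
      _ ≤ s ^ q := Real.rpow_le_rpow one_pos.le hs hq0.le
  have hρ : ∀ s t : ℝ, 0 < s → s ≤ t →
      s ^ (q-1) * ψ (s ^ q) ≤ t ^ (q-1) * ψ (t ^ q) := by
    intro s t hs hst
    rcases le_total t 1 with ht1 | ht1
    · exact hρ1 s t hs hst ht1
    · have hρt : t ^ (q-1) * ψ (t ^ q) = t ^ (q-1) := by
        rw [hψ_pow_ge1 t ht1, mul_one]
      have hone : (1:ℝ) ≤ t ^ (q-1) := by
        calc (1:ℝ) = 1 ^ (q-1) := (Real.one_rpow _).symm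
          _ ≤ t ^ (q-1) := Real.rpow_le_rpow one_pos.le ht1 (by linarith)
      rcases le_total s 1 with hs1 | hs1
      · have h1 := hρ1 s 1 hs hs1 le_rfl
        have e : (1:ℝ) ^ (q-1) * ψ (1 ^ q) = 1 := by
          rw [Real.one_rpow, Real.one_rpow, hψ_one 1 le_rfl, one_mul]
        rw [hρt]
        exact le_trans (h1.trans (le_of_eq e)) hone
      · rw [hρt, hψ_pow_ge1 s hs1, mul_one]
        exact Real.rpow_le_rpow (by linarith) hst (by linarith)
  -- rpow integral helper
  have hrint : ∀ a b : ℝ, 0 ≤ a → a ≤ b →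
      (∫ u in (a^q)..(b^q), u ^ (1/q - 1)) = q * (b - a) := by
    intro a b ha hab
    rw [integral_rpow (Or.inl (by linarith : (-1:ℝ) < 1/q - 1))]
    rw [sub_add_cancel, hpow_inv a ha, hpow_inv b (le_trans ha hab)]
    field_simp
  have hrpow_int : ∀ (a b B : ℝ), IntervalIntegrable (fun u : ℝ => B * u ^ (1/q-1)) volume a b :=
    fun a b B => (intervalIntegral.intervalIntegrable_rpow'
      (by linarith : (-1:ℝ) < 1/q - 1)).const_mul B
  -- pointwise comparison with the weight
  have hcomp : ∀ y u : ℝ, 0 < u →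
      u ^ (1 - 1/q) * ψ u = (u ^ (1/q)) ^ (q-1) * ψ ((u ^ (1/q)) ^ q) := by
    intro y u hu0
    rw [hinv_pow u hu0.le]
    congr 1
    rw [← Real.rpow_mul hu0.le]
    congr 1
    field_simp
  have hcancel : ∀ u : ℝ, 0 < u → u ^ (1 - 1/q) * u ^ (1/q - 1) = 1 := by
    intro u hu0
    rw [← Real.rpow_add hu0]
    norm_num
  have hconvN : ConvexOn ℝ (Ici 0) N := by
    apply convexOn_of_slope_mono_adjacent (convex_Ici 0)
    intro x y z hx hz hxy hyz
    have hx0 : (0:ℝ) ≤ x := hx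
    have hy0 : (0:ℝ) < y := lt_of_le_of_lt hx0 hxy
    have hz0 : (0:ℝ) < z := lt_trans hy0 hyz
    set B := y ^ (q-1) * ψ (y ^ q) with hBdef
    have hBnn : 0 ≤ B := mul_nonneg (Real.rpow_nonneg hy0.le _) (hψ_nn _)
    have hxq : x ^ q ≤ y ^ q := Real.rpow_le_rpow hx0 hxy.le hq0.le
    have hyq : y ^ q ≤ z ^ q := Real.rpow_le_rpow hy0.le hyz.le hq0.le
    have hup : ∀ u ∈ Ioc (x^q) (y^q), ψ u ≤ B * u ^ (1/q - 1) := by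
      intro u hu
      have hu0 : (0:ℝ) < u := lt_of_le_of_lt (Real.rpow_nonneg hx0 q) hu.1
      have hvy : u ^ (1/q) ≤ y := by
        have := Real.rpow_le_rpow hu0.le hu.2 hiq.le
        rwa [hpow_inv y hy0.le] at this
      have hkey : u ^ (1 - 1/q) * ψ u ≤ B := by
        rw [hcomp y u hu0]
        exact hρ _ y (Real.rpow_pos_of_pos hu0 _) hvy
      have h3 := mul_le_mul_of_nonneg_right hkey
        (Real.rpow_nonneg hu0.le (1/q - 1))
      calc ψ u = u ^ (1 - 1/q) * ψ u * u ^ (1/q - 1) := by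
            rw [mul_comm (u ^ (1 - 1/q)) (ψ u), mul_assoc, hcancel u hu0, mul_one]
        _ ≤ B * u ^ (1/q - 1) := h3
    have hlow : ∀ u ∈ Ioc (y^q) (z^q), B * u ^ (1/q - 1) ≤ ψ u := by
      intro u hu
      have hu0 : (0:ℝ) < u := lt_of_le_of_lt (Real.rpow_nonneg hy0.le q) hu.1
      have hvy : y ≤ u ^ (1/q) := by
        have := Real.rpow_le_rpow (Real.rpow_nonneg hy0.le q) hu.1.le hiq.le
        rwa [hpow_inv y hy0.le] at this
      have hkey : B ≤ u ^ (1 - 1/q) * ψ u := by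
        rw [hcomp y u hu0]
        exact hρ y _ hy0 hvy
      have h3 := mul_le_mul_of_nonneg_right hkey
        (Real.rpow_nonneg hu0.le (1/q - 1))
      calc B * u ^ (1/q - 1) ≤ u ^ (1 - 1/q) * ψ u * u ^ (1/q - 1) := h3
        _ = ψ u := by
            rw [mul_comm (u ^ (1 - 1/q)) (ψ u), mul_assoc, hcancel u hu0, mul_one]
    have hB1 : N y - N x ≤ B * (q * (y - x)) := by
      rw [hNadd x y hx0 hxy.le]
      have h1 : (∫ u in (x^q)..(y^q), ψ u) ≤ ∫ u in (x^q)..(y^q), B * u ^ (1/q - 1) :=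
        integral_mono_Ioc hxq (hψ_int _ _ (Real.rpow_nonneg hx0 q) hxq)
          (hrpow_int _ _ B) hup
      rw [intervalIntegral.integral_const_mul, hrint x y hx0 hxy.le] at h1
      linarith
    have hB2 : B * (q * (z - y)) ≤ N z - N y := by
      rw [hNadd y z hy0.le hyz.le]
      have h1 : (∫ u in (y^q)..(z^q), B * u ^ (1/q - 1)) ≤ ∫ u in (y^q)..(z^q), ψ u :=
        integral_mono_Ioc hyq (hrpow_int _ _ B)
          (hψ_int _ _ (Real.rpow_nonneg hy0.le q) hyq) hlow
      rw [intervalIntegral.integral_const_mul, hrint y z hy0.le hyz.le] at h1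
      linarith
    have hxy' : (0:ℝ) < y - x := sub_pos.2 hxy
    have hyz' : (0:ℝ) < z - y := sub_pos.2 hyz
    rw [div_le_div_iff₀ hxy' hyz']
    nlinarith [hB1, hB2, mul_le_mul_of_nonneg_right hB1 hyz'.le,
      mul_le_mul_of_nonneg_left hB2 hxy'.le]
  -- concavity of the primitive
  have hH : ConcaveOn ℝ (Ici 0) (fun t : ℝ => ∫ u in (0:ℝ)..t, ψ u) := by
    apply concaveOn_of_slope_anti_adjacent (convex_Ici 0)
    intro x y z hx hz hxy hyz
    have hx0 : (0:ℝ) ≤ x := hx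
    have hy0 : (0:ℝ) < y := lt_of_le_of_lt hx0 hxy
    have hadd1 : (∫ u in (0:ℝ)..y, ψ u) - (∫ u in (0:ℝ)..x, ψ u) = ∫ u in x..y, ψ u := by
      rw [← intervalIntegral.integral_add_adjacent_intervals (hψ_int 0 x le_rfl hx0)
        (hψ_int x y hx0 hxy.le)]
      ring
    have hadd2 : (∫ u in (0:ℝ)..z, ψ u) - (∫ u in (0:ℝ)..y, ψ u) = ∫ u in y..z, ψ u := by
      rw [← intervalIntegral.integral_add_adjacent_intervals (hψ_int 0 y le_rfl hy0.le)
        (hψ_int y z hy0.le hyz.le)]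
      ring
    have h1 : (y - x) * ψ y ≤ ∫ u in x..y, ψ u := by
      have hconst : ∫ u in x..y, ψ y = (y - x) * ψ y := by
        rw [intervalIntegral.integral_const, smul_eq_mul]
      rw [← hconst]
      exact integral_mono_Ioc hxy.le intervalIntegrable_const (hψ_int x y hx0 hxy.le)
        (fun u hu => hψ_anti u y (lt_of_le_of_lt hx0 hu.1) hu.2)
    have h2 : (∫ u in y..z, ψ u) ≤ (z - y) * ψ y := by
      have hconst : ∫ u in y..z, ψ y = (z - y) * ψ y := by
        rw [intervalIntegral.integral_const, smul_eq_mul]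
      rw [← hconst]
      exact integral_mono_Ioc hyz.le (hψ_int y z hy0.le hyz.le) intervalIntegrable_const
        (fun u hu => hψ_anti y u hy0 hu.1.le)
    have hxy' : (0:ℝ) < y - x := sub_pos.2 hxy
    have hyz' : (0:ℝ) < z - y := sub_pos.2 hyz
    rw [hadd1, hadd2, div_le_div_iff₀ hyz' hxy']
    nlinarith [mul_le_mul_of_nonneg_right h2 hxy'.le,
      mul_le_mul_of_nonneg_left h1 hyz'.le]
  have hRC : RConcave q N := by
    have hkey : ∀ w : ℝ, 0 ≤ w → N (w ^ (1/q)) = ∫ u in (0:ℝ)..w, ψ u := by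
      intro w hw
      simp only [hNdef]
      rw [hinv_pow w hw]
    refine ⟨convex_Ici 0, ?_⟩
    intro x hx y hy a b ha hb hab
    have hx0 : (0:ℝ) ≤ x := hx
    have hy0 : (0:ℝ) ≤ y := hy
    have hmem : (0:ℝ) ≤ a * x + b * y :=
      add_nonneg (mul_nonneg ha hx0) (mul_nonneg hb hy0)
    simp only [smul_eq_mul]
    rw [hkey x hx0, hkey y hy0, hkey _ hmem]
    have := hH.2 hx hy ha hb hab
    simpa using this
  -- assemble
  refine ⟨N, ⟨hNmono, hconvN, hN0⟩, hRC, ⟨C * q, by positivity, ?_⟩⟩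
  intro t ht
  rcases eq_or_lt_of_le ht.1 with rfl | ht0
  · simp [hM0, hN0]
  · have hCq1 : (1:ℝ) ≤ C * q := by nlinarith
    have h1 : (C*q)⁻¹ ≤ 1 := by
      have h2 := inv_anti₀ one_pos hCq1
      simpa using h2
    constructor
    · calc (C*q)⁻¹ * M t ≤ 1 * M t := mul_le_mul_of_nonneg_right h1 (hMnn t ht0.le)
        _ = M t := one_mul _
        _ ≤ N t := hNlow t ht0 ht.2
    · exact hNup t ht0 ht.2

/-- An Orlicz function `M` is equivalent on `[0,1]` to a `q`-concave Orlicz function iff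
`C⁻¹ s^q M(t) ≤ M(st)` for all `0 < s < 1`, `0 < t ≤ 1`. -/
theorem equivalent_to_q_concave_iff
    (q : ℝ) (hq : 1 < q)
    (M : ℝ → ℝ) (hM : IsOrliczFunction M) (hM1 : M 1 = 1)
    (hMbij : Set.BijOn M (Ici 0) (Ici 0)) :
    (∃ N : ℝ → ℝ, IsOrliczFunction N ∧ RConcave q N ∧ EquivOn01 M N) ↔
      (∃ C > (0:ℝ), ∀ s t : ℝ, 0 < s → s < 1 → 0 < t → t ≤ 1 →
        C⁻¹ * s ^ q * M t ≤ M (s * t)) := by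
  constructor
  · exact forward_dir q hq M hM
  · rintro ⟨C, hCpos, hC⟩
    apply backward_dir q hq M hM hM1 (max C 1) (le_max_right C 1)
    intro s t hs hs1 ht ht1
    have hMt : 0 ≤ M t := by
      have := hM.1 (show (0:ℝ) ∈ Ici 0 by simp) (show t ∈ Ici (0:ℝ) from ht.le) ht.le
      rwa [hM.2.2] at this
    have h1 : (max C 1)⁻¹ ≤ C⁻¹ := by
      apply inv_anti₀ hCpos (le_max_left C 1)
    calc (max C 1)⁻¹ * s ^ q * M t ≤ C⁻¹ * s ^ q * M t := by
          apply mul_le_mul_of_nonneg_right _ hMt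
          exact mul_le_mul_of_nonneg_right h1 (Real.rpow_nonneg hs.le q)
      _ ≤ M (s * t) := hC s t hs hs1 ht ht1
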